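/- arXiv:2203.09255 — 4 statements merged into one kernel-verified Lean document; each statement's English description precedes it below -/
import Mathlib

section
/- Let ν > 1 be real and a₀ > 0. Define S₂(n) = Σ_{k=0}^{n} w(k)·w(n−k), where w(0) = a₀ and w(k) = k^{−ν} for k ≥ 1. Then for all n ≥ 2, S₂(n) ≥ (a₀ + 1)·n^{−ν}. -/
/-- Weighted power-law sequence: `w 0 = a₀`, `w k = k^(-ν)` for `k ≥ 1`. -/
noncomputable def plw (a₀ ν : ℝ) (k : ℕ) : ℝ :=
  if k = 0 then a₀ else (k : ℝ) ^ (-ν)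

/-- `S₂ n`: the self-convolution of `plw a₀ ν`. -/
noncomputable def S2 (a₀ ν : ℝ) (n : ℕ) : ℝ :=
  ∑ k ∈ Finset.range (n + 1), plw a₀ ν k * plw a₀ ν (n - k)

theorem S2_lower_bound (ν a₀ : ℝ) (hν : 1 < ν) (ha : 0 < a₀) :
    ∀ n : ℕ, 2 ≤ n → (a₀ + 1) * (n : ℝ) ^ (-ν) ≤ S2 a₀ ν n := by
  intro n hn
  have hw : ∀ k : ℕ, 0 ≤ plw a₀ ν k := by
    intro k
    unfold plw
    split
    · exact ha.le
    · positivity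
  have hsub : ({0, 1} : Finset ℕ) ⊆ Finset.range (n + 1) := by
    intro x hx
    simp only [Finset.mem_insert, Finset.mem_singleton] at hx
    rcases hx with rfl | rfl <;> simp <;> omega
  have h1 : ∑ k ∈ ({0, 1} : Finset ℕ), plw a₀ ν k * plw a₀ ν (n - k) ≤ S2 a₀ ν n := by
    apply Finset.sum_le_sum_of_subset_of_nonneg hsub
    intro i _ _
    exact mul_nonneg (hw i) (hw (n - i))
  have hne : n ≠ 0 := by omega
  have hn1 : n - 1 ≠ 0 := by omega
  have hsum : ∑ k ∈ ({0, 1} : Finset ℕ), plw a₀ ν k * plw a₀ ν (n - k)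
      = a₀ * (n : ℝ) ^ (-ν) + ((1:ℝ) ^ (-ν)) * ((n - 1 : ℕ) : ℝ) ^ (-ν) := by
    rw [Finset.sum_pair (by norm_num)]
    simp [plw, hne, hn1]
  have hmono : (n : ℝ) ^ (-ν) ≤ ((n - 1 : ℕ) : ℝ) ^ (-ν) := by
    apply Real.rpow_le_rpow_of_nonpos
    · exact_mod_cast Nat.pos_of_ne_zero hn1
    · exact_mod_cast Nat.sub_le n 1
    · linarith
  calc (a₀ + 1) * (n : ℝ) ^ (-ν) = a₀ * (n : ℝ) ^ (-ν) + (n : ℝ) ^ (-ν) := by ring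
    _ ≤ a₀ * (n : ℝ) ^ (-ν) + ((1:ℝ) ^ (-ν)) * ((n - 1 : ℕ) : ℝ) ^ (-ν) := by
        rw [Real.one_rpow, one_mul]; linarith
    _ = _ := hsum.symm
    _ ≤ S2 a₀ ν n := h1
end

section
/- Let ν > 1 be real and a₀ > 0. Define w(0) = a₀ and w(k) = k^{−ν} for k ≥ 1, and S₂(n) = Σ_{k=0}^{n} w(k)·w(n−k). Then there exists a constant B = 2a₀ + 2^{ν+1} + 2^{ν+1}/(ν−1) such that for all n ≥ 2, S₂(n) ≤ B·n^{−ν}. -/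
private lemma bernoulli_aux {p x : ℝ} (hp : 0 < p) (hx : 2 ≤ x) :
    1 + p / x ≤ ((x - 1) / x) ^ (-p) := by
  have hx0 : (0:ℝ) < x := by linarith
  have hx1 : (0:ℝ) < x - 1 := by linarith
  have htpos : (0:ℝ) < ((x - 1) / x) ^ p := Real.rpow_pos_of_pos (by positivity) p
  rcases le_or_gt p 1 with hp1 | hp1
  · have hs : (-1 : ℝ) ≤ -(1/x) := by
      have : 1/x ≤ 1 := by rw [div_le_one hx0]; linarith
      linarith
    have h1 : (1 + -(1/x)) ^ p ≤ 1 + p * -(1/x) :=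
      rpow_one_add_le_one_add_mul_self hs hp.le hp1
    have heq : (1 : ℝ) + -(1/x) = (x - 1) / x := by field_simp; ring
    rw [heq] at h1
    have h2 : 1 + p * -(1/x) = 1 - p / x := by ring
    rw [h2] at h1
    rw [Real.rpow_neg (by positivity), inv_eq_one_div, le_div_iff₀ htpos]
    have hpx : p / x ≤ 1 := by
      rw [div_le_one hx0]; linarith
    nlinarith [mul_le_mul_of_nonneg_left h1 (by positivity : (0:ℝ) ≤ 1 + p / x),
      sq_nonneg (p / x)]
  · have hinv : ((x - 1) / x) ^ (-p) = (1 + 1/(x-1)) ^ p := by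
      rw [Real.rpow_neg (by positivity), ← Real.inv_rpow (by positivity)]
      congr 1
      field_simp
      ring
    rw [hinv]
    have hs : (-1 : ℝ) ≤ 1/(x-1) := by
      have : (0:ℝ) ≤ 1/(x-1) := by positivity
      linarith
    have h1 : 1 + p * (1/(x-1)) ≤ (1 + 1/(x-1)) ^ p :=
      one_add_mul_self_le_rpow_one_add hs hp1.le
    have h2 : p / x ≤ p * (1/(x-1)) := by
      rw [mul_one_div]
      exact div_le_div_of_nonneg_left hp.le hx1 (by linarith)
    linarith

private lemma tangent {ν x : ℝ} (hν : 1 < ν) (hx : 2 ≤ x) :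
    (ν - 1) * x ^ (-ν) ≤ (x - 1) ^ (1 - ν) - x ^ (1 - ν) := by
  have hx0 : (0:ℝ) < x := by linarith
  have hx1 : (0:ℝ) < x - 1 := by linarith
  have hp : (0:ℝ) < ν - 1 := by linarith
  have h := bernoulli_aux hp hx
  have hdiv : ((x - 1) / x) ^ (-(ν-1)) = (x-1) ^ (-(ν-1)) / x ^ (-(ν-1)) :=
    Real.div_rpow hx1.le hx0.le _
  have hxp : (0:ℝ) < x ^ (-(ν-1)) := Real.rpow_pos_of_pos hx0 _
  rw [hdiv, le_div_iff₀ hxp] at h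
  have hxx : x ^ (-(ν-1)) / x = x ^ (-ν) := by
    rw [div_eq_mul_inv, ← Real.rpow_neg_one x, ← Real.rpow_add hx0]
    congr 1
    ring
  have key : (ν-1) / x * x ^ (-(ν-1)) = (ν-1) * x ^ (-ν) := by
    rw [div_mul_eq_mul_div, mul_div_assoc, hxx]
  have hexp : (1:ℝ) - ν = -(ν-1) := by ring
  rw [hexp]
  have expand : x ^ (-(ν-1)) + (ν-1) * x ^ (-ν) = (1 + (ν-1)/x) * x ^ (-(ν-1)) := by
    rw [← key]; ring
  linarith [expand ▸ h]

private lemma sum_bound {ν : ℝ} (hν : 1 < ν) (m : ℕ) :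
    ∑ j ∈ Finset.range m, ((j:ℝ) + 1) ^ (-ν) ≤ 1 + 1/(ν - 1) := by
  have hp : (0:ℝ) < ν - 1 := by linarith
  have key : ∀ m : ℕ, 1 ≤ m → ∑ j ∈ Finset.range m, ((j:ℝ) + 1) ^ (-ν)
      ≤ 1 + 1/(ν-1) - ((m:ℝ)) ^ (1-ν) / (ν-1) := by
    intro m hm
    induction m with
    | zero => omega
    | succ k ih =>
      rcases Nat.lt_or_ge 1 (k+1) with h1 | h1
      · have hk : 1 ≤ k := by omega
        have ihk := ih hk
        rw [Finset.sum_range_succ]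
        have hk2 : (2:ℝ) ≤ (k:ℝ) + 1 := by
          have : (1:ℝ) ≤ (k:ℝ) := by exact_mod_cast hk
          linarith
        have ht := tangent hν hk2
        have hsimp : ((k:ℝ) + 1 - 1) = (k:ℝ) := by ring
        rw [hsimp] at ht
        have ht' : ((k:ℝ) + 1) ^ (-ν) ≤ ((k:ℝ) ^ (1-ν) - ((k:ℝ)+1) ^ (1-ν)) / (ν-1) :=
          (le_div_iff₀' hp).mpr ht
        rw [sub_div] at ht'
        push_cast
        linarith
      · have : k = 0 := by omega
        subst this
        simp only [Finset.range_one, Finset.sum_singleton, Nat.cast_zero, zero_add,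
          Nat.cast_one]
        rw [Real.one_rpow, Real.one_rpow]
        linarith
  rcases Nat.eq_zero_or_pos m with rfl | hm
  · simp
    positivity
  · have h := key m hm
    have : (0:ℝ) ≤ ((m:ℝ)) ^ (1-ν) / (ν-1) := by positivity
    linarith

private lemma prod_bound_aux {ν a b : ℝ} (hν : 0 < ν) (ha : 0 < a) (hb : 0 < b)
    (hab : a ≤ b) :
    a ^ (-ν) * b ^ (-ν) ≤ 2 ^ ν * (a + b) ^ (-ν) * (a ^ (-ν) + b ^ (-ν)) := by
  have h1 : b ^ (-ν) ≤ 2 ^ ν * (a + b) ^ (-ν) := by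
    have h2 : ((a+b)/2) ^ (-ν) = (a+b) ^ (-ν) / 2 ^ (-ν) :=
      Real.div_rpow (by linarith) (by norm_num) _
    have h3 : b ^ (-ν) ≤ ((a+b)/2) ^ (-ν) :=
      Real.rpow_le_rpow_of_nonpos (by linarith) (by linarith) (by linarith)
    have h4 : (2:ℝ) ^ (-ν) = ((2:ℝ) ^ ν)⁻¹ := Real.rpow_neg (by norm_num) ν
    rw [h2, h4] at h3
    have h5 : (a+b) ^ (-ν) / ((2:ℝ) ^ ν)⁻¹ = 2 ^ ν * (a+b) ^ (-ν) := by
      field_simp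
    rw [h5] at h3
    linarith [h3]
  have ha' : (0:ℝ) < a ^ (-ν) := Real.rpow_pos_of_pos ha _
  have hb' : (0:ℝ) < b ^ (-ν) := Real.rpow_pos_of_pos hb _
  have hs : (0:ℝ) < 2 ^ ν * (a+b) ^ (-ν) := by
    have := Real.rpow_pos_of_pos (show (0:ℝ) < a + b by linarith) (-ν)
    have := Real.rpow_pos_of_pos (show (0:ℝ) < 2 by norm_num) ν
    positivity
  nlinarith [mul_le_mul_of_nonneg_left h1 ha'.le]

private lemma prod_bound {ν a b : ℝ} (hν : 0 < ν) (ha : 0 < a) (hb : 0 < b) :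
    a ^ (-ν) * b ^ (-ν) ≤ 2 ^ ν * (a + b) ^ (-ν) * (a ^ (-ν) + b ^ (-ν)) := by
  rcases le_total a b with h | h
  · exact prod_bound_aux hν ha hb h
  · have := prod_bound_aux hν hb ha h
    have hc : b + a = a + b := by ring
    rw [hc] at this
    linarith [this]

theorem S2_upper_bound (ν a₀ : ℝ) (hν : 1 < ν) (ha : 0 < a₀) :
    ∃ B : ℝ, B = 2 * a₀ + 2 ^ (ν + 1) + 2 ^ (ν + 1) / (ν - 1) ∧
      ∀ n : ℕ, 2 ≤ n → S2 a₀ ν n ≤ B * (n : ℝ) ^ (-ν) := by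
  refine ⟨2 * a₀ + 2 ^ (ν + 1) + 2 ^ (ν + 1) / (ν - 1), rfl, ?_⟩
  intro n hn
  have hν0 : (0:ℝ) < ν := by linarith
  have hn0 : (0:ℝ) < (n:ℝ) := by
    have : 0 < n := by omega
    exact_mod_cast this
  have hnpow : (0:ℝ) < (n:ℝ) ^ (-ν) := Real.rpow_pos_of_pos hn0 _
  -- split the sum
  have hsplit : S2 a₀ ν n =
      a₀ * (n:ℝ) ^ (-ν) + (∑ j ∈ Finset.range (n-1), plw a₀ ν (j+1) * plw a₀ ν (n-(j+1)))
        + (n:ℝ) ^ (-ν) * a₀ := by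
    unfold S2
    rw [Finset.sum_range_succ]
    have hre : n = (n - 1) + 1 := by omega
    rw [show Finset.range n = Finset.range ((n-1)+1) by rw [← hre]]
    rw [Finset.sum_range_succ']
    have h0 : plw a₀ ν 0 * plw a₀ ν (n - 0) = a₀ * (n:ℝ) ^ (-ν) := by
      simp [plw, show n ≠ 0 by omega]
    have hn' : plw a₀ ν n * plw a₀ ν (n - n) = (n:ℝ) ^ (-ν) * a₀ := by
      simp [plw, show n ≠ 0 by omega]
    rw [h0, hn']
    ring
  -- bound middle terms
  have hmid : ∀ j ∈ Finset.range (n-1), plw a₀ ν (j+1) * plw a₀ ν (n-(j+1)) ≤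
      2 ^ ν * (n:ℝ) ^ (-ν) * (((j:ℝ)+1) ^ (-ν) + ((n:ℝ)-((j:ℝ)+1)) ^ (-ν)) := by
    intro j hj
    rw [Finset.mem_range] at hj
    have hj1 : j + 1 ≤ n - 1 := by omega
    have hle : j + 1 ≤ n := by omega
    have hpos : 1 ≤ n - (j+1) := by omega
    have h1 : plw a₀ ν (j+1) = ((j:ℝ)+1) ^ (-ν) := by
      unfold plw; rw [if_neg (by omega)]; push_cast; ring_nf
    have h2 : plw a₀ ν (n-(j+1)) = ((n:ℝ)-((j:ℝ)+1)) ^ (-ν) := by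
      unfold plw; rw [if_neg (by omega)]
      congr 1
      push_cast [hle]
      ring
    rw [h1, h2]
    have ha' : (0:ℝ) < (j:ℝ)+1 := by positivity
    have hb' : (0:ℝ) < (n:ℝ)-((j:ℝ)+1) := by
      have : ((j:ℝ)+1) < (n:ℝ) := by
        have : (j+1 : ℕ) < n := by omega
        exact_mod_cast this
      linarith
    have := prod_bound hν0 ha' hb'
    have hsum : ((j:ℝ)+1) + ((n:ℝ)-((j:ℝ)+1)) = (n:ℝ) := by ring
    rw [hsum] at this
    exact this
  have hM : (∑ j ∈ Finset.range (n-1), plw a₀ ν (j+1) * plw a₀ ν (n-(j+1))) ≤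
      2 ^ ν * (n:ℝ) ^ (-ν) *
        (∑ j ∈ Finset.range (n-1), (((j:ℝ)+1) ^ (-ν) + ((n:ℝ)-((j:ℝ)+1)) ^ (-ν))) := by
    rw [Finset.mul_sum]
    exact Finset.sum_le_sum hmid
  -- the reflected sum equals the plain one
  have hrefl : (∑ j ∈ Finset.range (n-1), ((n:ℝ)-((j:ℝ)+1)) ^ (-ν)) =
      ∑ j ∈ Finset.range (n-1), ((j:ℝ)+1) ^ (-ν) := by
    rw [← Finset.sum_range_reflect (fun j => ((j:ℝ)+1) ^ (-ν)) (n-1)]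
    apply Finset.sum_congr rfl
    intro j hj
    rw [Finset.mem_range] at hj
    congr 1
    have hnat : n - 1 - 1 - j = n - (2 + j) := by omega
    rw [hnat, Nat.cast_sub (show 2 + j ≤ n by omega)]
    push_cast
    ring
  have hT : (∑ j ∈ Finset.range (n-1), ((j:ℝ)+1) ^ (-ν)) ≤ 1 + 1/(ν-1) :=
    sum_bound hν (n-1)
  have hsum2 : (∑ j ∈ Finset.range (n-1), (((j:ℝ)+1) ^ (-ν) + ((n:ℝ)-((j:ℝ)+1)) ^ (-ν)))
      ≤ 2 * (1 + 1/(ν-1)) := by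
    rw [Finset.sum_add_distrib, hrefl]
    linarith
  have h2pow : (0:ℝ) < 2 ^ ν := Real.rpow_pos_of_pos (by norm_num) ν
  have hM2 : (∑ j ∈ Finset.range (n-1), plw a₀ ν (j+1) * plw a₀ ν (n-(j+1))) ≤
      2 ^ ν * (n:ℝ) ^ (-ν) * (2 * (1 + 1/(ν-1))) := by
    refine hM.trans ?_
    apply mul_le_mul_of_nonneg_left hsum2 (by positivity)
  have hBpow : (2:ℝ) ^ (ν+1) = 2 * 2 ^ ν := by
    rw [Real.rpow_add (by norm_num), Real.rpow_one]; ring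
  rw [hsplit]
  have hfinal : a₀ * (n:ℝ) ^ (-ν) + 2 ^ ν * (n:ℝ) ^ (-ν) * (2 * (1 + 1/(ν-1)))
      + (n:ℝ) ^ (-ν) * a₀ =
      (2 * a₀ + 2 ^ (ν+1) + 2 ^ (ν+1) / (ν-1)) * (n:ℝ) ^ (-ν) := by
    rw [hBpow]
    have hν1 : ν - 1 ≠ 0 := by intro h; linarith [hν]
    field_simp
    ring
  linarith [hM2, hfinal]
end

section
/- Let ν > 1 be real, a₀ > 0, m ≥ 2, and define w(0) = a₀, w(k) = k^{−ν} for k ≥ 1. Define S_m(n) = Σ_{k₁+⋯+k_m = n} w(k₁)⋯w(k_m), the sum over all m-tuples of nonnegative integers summing to n. Then for all n ≥ m, S_m(n) ≥ (a₀+1)^{m−1}·n^{−ν}. -/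
/-- `Sm m n`: the `m`-fold convolution of `plw a₀ ν`, i.e. the sum of
`w k₁ ⋯ w k_m` over all `m`-tuples of naturals with `k₁ + ⋯ + k_m = n`. -/
noncomputable def Sm (a₀ ν : ℝ) (m n : ℕ) : ℝ :=
  ∑ k ∈ Finset.Nat.antidiagonalTuple m n, ∏ i : Fin m, plw a₀ ν (k i)

lemma plw_nonneg (a₀ ν : ℝ) (ha : 0 < a₀) (k : ℕ) : 0 ≤ plw a₀ ν k := by
  unfold plw
  split
  · exact ha.le
  · positivity

/-- Sum over the image of `Fin.cons j` of an antidiagonal tuple set. -/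
lemma sum_cons_image (a₀ ν : ℝ) (m j l : ℕ) :
    ∑ k ∈ (Finset.Nat.antidiagonalTuple m l).image
        (fun x : Fin m → ℕ => (Fin.cons j x : Fin (m + 1) → ℕ)),
      ∏ i : Fin (m + 1), plw a₀ ν (k i) = plw a₀ ν j * Sm a₀ ν m l := by
  rw [Finset.sum_image (fun x _ y _ h => Fin.cons_right_injective (α := fun _ => ℕ) j h)]
  rw [Sm, Finset.mul_sum]
  refine Finset.sum_congr rfl fun k _ => ?_
  rw [Fin.prod_univ_succ]
  simp [Fin.cons_zero, Fin.cons_succ]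

lemma Sm_aux (ν a₀ : ℝ) (hν : 1 < ν) (ha : 0 < a₀) :
    ∀ m : ℕ, 1 ≤ m → ∀ n : ℕ, m ≤ n →
      (a₀ + 1) ^ (m - 1) * (n : ℝ) ^ (-ν) ≤ Sm a₀ ν m n := by
  intro m
  induction m with
  | zero => omega
  | succ m ih =>
    intro _ n hn
    rcases Nat.eq_zero_or_pos m with rfl | hm1
    · -- base case m = 1
      have hn0 : n ≠ 0 := by omega
      rw [Sm, Finset.Nat.antidiagonalTuple_one n, Finset.sum_singleton]
      simp [plw, hn0]
    · -- inductive step: m ≥ 1, n ≥ m + 1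
      have hIH1 : (a₀ + 1) ^ (m - 1) * (n : ℝ) ^ (-ν) ≤ Sm a₀ ν m n :=
        ih hm1 n (by omega)
      have hIH2 : (a₀ + 1) ^ (m - 1) * ((n - 1 : ℕ) : ℝ) ^ (-ν) ≤ Sm a₀ ν m (n - 1) :=
        ih hm1 (n - 1) (by omega)
      set A := (Finset.Nat.antidiagonalTuple m n).image (fun x : Fin m → ℕ => (Fin.cons 0 x : Fin (m + 1) → ℕ)) with hA
      set B := (Finset.Nat.antidiagonalTuple m (n - 1)).image (fun x : Fin m → ℕ => (Fin.cons 1 x : Fin (m + 1) → ℕ)) with hB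
      have hmemA : ∀ k ∈ A, k ∈ Finset.Nat.antidiagonalTuple (m + 1) n := by
        intro k hk
        rw [hA, Finset.mem_image] at hk
        obtain ⟨x, hx, rfl⟩ := hk
        rw [Finset.Nat.mem_antidiagonalTuple] at hx ⊢
        rw [Fin.sum_cons, hx]
        omega
      have hmemB : ∀ k ∈ B, k ∈ Finset.Nat.antidiagonalTuple (m + 1) n := by
        intro k hk
        rw [hB, Finset.mem_image] at hk
        obtain ⟨x, hx, rfl⟩ := hk
        rw [Finset.Nat.mem_antidiagonalTuple] at hx ⊢
        rw [Fin.sum_cons, hx]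
        omega
      have hdisj : Disjoint A B := by
        rw [Finset.disjoint_left]
        intro k hkA hkB
        rw [hA, Finset.mem_image] at hkA
        rw [hB, Finset.mem_image] at hkB
        obtain ⟨x, _, rfl⟩ := hkA
        obtain ⟨y, _, h⟩ := hkB
        have := congrFun h 0
        simp [Fin.cons_zero] at this
      have hsub : A ∪ B ⊆ Finset.Nat.antidiagonalTuple (m + 1) n := by
        intro k hk
        rcases Finset.mem_union.mp hk with h | h
        · exact hmemA k h
        · exact hmemB k h
      have hnonneg : ∀ k ∈ Finset.Nat.antidiagonalTuple (m + 1) n, k ∉ A ∪ B →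
          0 ≤ ∏ i : Fin (m + 1), plw a₀ ν (k i) :=
        fun k _ _ => Finset.prod_nonneg fun i _ => plw_nonneg a₀ ν ha (k i)
      have key : ∑ k ∈ A ∪ B, ∏ i : Fin (m + 1), plw a₀ ν (k i) ≤ Sm a₀ ν (m + 1) n :=
        Finset.sum_le_sum_of_subset_of_nonneg hsub hnonneg
      rw [Finset.sum_union hdisj, hA, hB, sum_cons_image, sum_cons_image] at key
      have hplw0 : plw a₀ ν 0 = a₀ := by simp [plw]
      have hplw1 : plw a₀ ν 1 = 1 := by simp [plw, Real.one_rpow]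
      rw [hplw0, hplw1, one_mul] at key
      refine le_trans ?_ key
      -- (n-1)^{-ν} ≥ n^{-ν}
      have hn1 : (0 : ℝ) < ((n - 1 : ℕ) : ℝ) := by
        have : 1 ≤ n - 1 := by omega
        exact_mod_cast Nat.lt_of_lt_of_le Nat.zero_lt_one this
      have hmono : (n : ℝ) ^ (-ν) ≤ ((n - 1 : ℕ) : ℝ) ^ (-ν) := by
        apply Real.rpow_le_rpow_of_nonpos hn1
        · exact_mod_cast Nat.sub_le n 1
        · linarith
      have hC : (0 : ℝ) ≤ (a₀ + 1) ^ (m - 1) := by positivity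
      have h2 : (a₀ + 1) ^ (m - 1) * (n : ℝ) ^ (-ν) ≤ Sm a₀ ν m (n - 1) :=
        le_trans (by nlinarith) hIH2
      have hm' : m + 1 - 1 = m := rfl
      rw [hm']
      have hpow : (a₀ + 1) ^ m = (a₀ + 1) * (a₀ + 1) ^ (m - 1) := by
        rw [← pow_succ']
        congr 1
        omega
      rw [hpow]
      nlinarith [mul_le_mul_of_nonneg_left hIH1 ha.le]

theorem Sm_lower_bound (ν a₀ : ℝ) (hν : 1 < ν) (ha : 0 < a₀) (m : ℕ) (hm : 2 ≤ m) :
    ∀ n : ℕ, m ≤ n → (a₀ + 1) ^ (m - 1) * (n : ℝ) ^ (-ν) ≤ Sm a₀ ν m n := by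
  exact Sm_aux ν a₀ hν ha m (by omega)
end

section
/- Let ν > 1, a₀ > 0, 2 ≤ n ≤ m, and suppose B > 0 satisfies Σ_{k₁+⋯+k_n = n} w(k₁)⋯w(k_n) ≤ B^{n−1}·n^{−ν}, where w(0) = a₀, w(k) = k^{−ν} for k ≥ 1. Then S_m(n) = Σ_{k₁+⋯+k_m = n} w(k₁)⋯w(k_m) ≤ a₀^{m−n}·(m·e/n)^n·B^{n−1}·n^{−ν}. -/
private lemma plw_pos {a₀ ν : ℝ} (ha : 0 < a₀) (k : ℕ) : 0 < plw a₀ ν k := by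
  unfold plw
  split_ifs with h
  · exact ha
  · exact Real.rpow_pos_of_pos (by exact_mod_cast Nat.pos_of_ne_zero h) _

@[to_additive]
private lemma prod_orderEmbOfFin_aux {α M : Type*} [LinearOrder α] [CommMonoid M]
    (s : Finset α) {n : ℕ} (h : s.card = n) (F : α → M) :
    ∏ j : Fin n, F (s.orderEmbOfFin h j) = ∏ i ∈ s, F i := by
  rw [← Finset.prod_coe_sort s F,
    ← Equiv.prod_comp (s.orderIsoOfFin h).toEquiv (fun x : s => F (x : α))]
  exact Finset.prod_congr rfl fun j _ => by
    rw [← Finset.coe_orderIsoOfFin_apply]; rfl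

private lemma choose_le_bound (m n : ℕ) (hn : 0 < n) :
    (m.choose n : ℝ) ≤ ((m : ℝ) * Real.exp 1 / n) ^ n := by
  have hnR : (0:ℝ) < n := by exact_mod_cast hn
  have hf : (0:ℝ) < (n.factorial : ℝ) := by exact_mod_cast n.factorial_pos
  have h1 : (m.choose n : ℝ) ≤ (m:ℝ)^n / n.factorial := Nat.choose_le_pow_div n m
  have h2 : (n:ℝ)^n / n.factorial ≤ Real.exp n :=
    Real.pow_div_factorial_le_exp (x := (n:ℝ)) (le_of_lt hnR) n
  have h2' : (n:ℝ)^n ≤ Real.exp n * n.factorial := by rwa [div_le_iff₀ hf] at h2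
  have hexp : Real.exp 1 ^ n = Real.exp n := by
    rw [← Real.exp_nat_mul]; simp
  have hrw : ((m : ℝ) * Real.exp 1 / n) ^ n = (m:ℝ)^n * Real.exp n / (n:ℝ)^n := by
    rw [div_pow, mul_pow, hexp]
  rw [hrw]
  refine h1.trans ?_
  rw [div_le_div_iff₀ hf (pow_pos hnR n)]
  calc (m:ℝ)^n * (n:ℝ)^n ≤ (m:ℝ)^n * (Real.exp n * n.factorial) :=
        mul_le_mul_of_nonneg_left h2' (by positivity)
    _ = (m:ℝ)^n * Real.exp n * (n.factorial : ℝ) := by ring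

theorem Sm_upper_bound_few_vars (ν a₀ B : ℝ) (hν : 1 < ν) (ha : 0 < a₀) (hB : 0 < B)
    (m n : ℕ) (hn : 2 ≤ n) (hnm : n ≤ m)
    (hBn : Sm a₀ ν n n ≤ B ^ (n - 1) * (n : ℝ) ^ (-ν)) :
    Sm a₀ ν m n ≤
      a₀ ^ (m - n) * ((m : ℝ) * Real.exp 1 / (n : ℝ)) ^ n * B ^ (n - 1) * (n : ℝ) ^ (-ν) := by
  classical
  have hm : 0 < m := lt_of_lt_of_le (by omega) hnm
  have hn0 : 0 < n := by omega
  set A := Finset.Nat.antidiagonalTuple m n with hA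
  -- support of any tuple in A has at most n elements
  have hsuppcard : ∀ k ∈ A, (Finset.univ.filter fun i => k i ≠ 0).card ≤ n := by
    intro k hk
    have hsum : ∑ i, k i = n := Finset.Nat.mem_antidiagonalTuple.mp hk
    calc (Finset.univ.filter fun i => k i ≠ 0).card
        = ∑ i ∈ Finset.univ.filter (fun i => k i ≠ 0), 1 := by simp
      _ ≤ ∑ i ∈ Finset.univ.filter (fun i => k i ≠ 0), k i := by
          refine Finset.sum_le_sum fun i hi => ?_
          have := (Finset.mem_filter.mp hi).2
          omega
      _ ≤ ∑ i, k i := Finset.sum_le_sum_of_subset (Finset.filter_subset _ _)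
      _ = n := hsum
  have hcardu : (Finset.univ : Finset (Fin m)).card = m := by simp
  choose! S hS1 _hS2 hS3 using fun k (hk : k ∈ A) =>
    Finset.exists_subsuperset_card_eq
      (Finset.subset_univ (Finset.univ.filter fun i => k i ≠ 0)) (hsuppcard k hk)
      (by rw [hcardu]; exact hnm)
  -- embedding of Fin n into a chosen superset
  set emb : Finset (Fin m) → Fin n → Fin m := fun s =>
    if h : s.card = n then fun j => s.orderEmbOfFin h j else fun _ => ⟨0, hm⟩ with hembdef
  set g : (Fin m → ℕ) → Finset (Fin m) × (Fin n → ℕ) := fun k =>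
    (S k, fun j => k (emb (S k) j)) with hgdef
  have hembeq : ∀ (s : Finset (Fin m)) (h : s.card = n) (j : Fin n),
      emb s j = s.orderEmbOfFin h j := by
    intro s h j
    simp only [hembdef, dif_pos h]
  have hzero : ∀ k ∈ A, ∀ i, i ∉ S k → k i = 0 := by
    intro k hk i hi
    by_contra h
    exact hi (hS1 k hk (Finset.mem_filter.mpr ⟨Finset.mem_univ i, h⟩))
  -- the second component lands in antidiagonalTuple n n
  have hg2 : ∀ k ∈ A, (fun j => k (emb (S k) j)) ∈ Finset.Nat.antidiagonalTuple n n := by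
    intro k hk
    rw [Finset.Nat.mem_antidiagonalTuple]
    have h := hS3 k hk
    calc ∑ j, k (emb (S k) j) = ∑ j : Fin n, k ((S k).orderEmbOfFin h j) :=
          Finset.sum_congr rfl fun j _ => by rw [hembeq (S k) h j]
      _ = ∑ i ∈ S k, k i := sum_orderEmbOfFin_aux (S k) h (fun i => k i)
      _ = ∑ i, k i := Finset.sum_subset (Finset.subset_univ _)
          (fun i _ hi => hzero k hk i hi)
      _ = n := Finset.Nat.mem_antidiagonalTuple.mp hk
  -- the product splits
  have hterm : ∀ k ∈ A, (∏ i, plw a₀ ν (k i)) =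
      a₀ ^ (m - n) * ∏ j : Fin n, plw a₀ ν (k (emb (S k) j)) := by
    intro k hk
    have h := hS3 k hk
    have hc : ((S k)ᶜ).card = m - n := by
      rw [Finset.card_compl, h]; simp
    have h1 : ∏ i ∈ (S k)ᶜ, plw a₀ ν (k i) = a₀ ^ (m - n) := by
      rw [← hc, ← Finset.prod_const]
      refine Finset.prod_congr rfl fun i hi => ?_
      rw [hzero k hk i (Finset.mem_compl.mp hi)]
      simp [plw]
    have h2 : (∏ j : Fin n, plw a₀ ν (k (emb (S k) j))) = ∏ i ∈ S k, plw a₀ ν (k i) := by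
      rw [show (∏ j : Fin n, plw a₀ ν (k (emb (S k) j)))
          = ∏ j : Fin n, plw a₀ ν (k ((S k).orderEmbOfFin h j)) from
          Finset.prod_congr rfl fun j _ => by rw [hembeq (S k) h j]]
      exact prod_orderEmbOfFin_aux (S k) h (fun i => plw a₀ ν (k i))
    rw [← Finset.prod_mul_prod_compl (S k) (fun i => plw a₀ ν (k i)), h1, h2, mul_comm]
  -- injectivity of g on A
  have hinj : ∀ k1 ∈ A, ∀ k2 ∈ A, g k1 = g k2 → k1 = k2 := by
    intro k1 h1 k2 h2 he
    have hs : S k1 = S k2 := congrArg Prod.fst he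
    have ht : (fun j => k1 (emb (S k1) j)) = fun j => k2 (emb (S k2) j) :=
      congrArg Prod.snd he
    funext i
    by_cases hi : i ∈ S k1
    · have hc := hS3 k1 h1
      obtain ⟨j, hj⟩ : ∃ j, (S k1).orderEmbOfFin hc j = i := by
        obtain ⟨j, hj⟩ := ((S k1).orderIsoOfFin hc).surjective ⟨i, hi⟩
        exact ⟨j, by rw [← Finset.coe_orderIsoOfFin_apply, hj]⟩
      have e1 : emb (S k1) j = i := by rw [hembeq (S k1) hc j]; exact hj
      have hcf := congrFun ht j
      rw [e1, ← hs, e1] at hcf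
      exact hcf
    · rw [hzero k1 h1 i hi, hzero k2 h2 i (hs ▸ hi)]
  -- main estimate
  have hBt : 0 < B ^ (n - 1) * (n : ℝ) ^ (-ν) :=
    mul_pos (pow_pos hB _) (Real.rpow_pos_of_pos (by exact_mod_cast hn0) _)
  have hbound : (0:ℝ) ≤ ((m : ℝ) * Real.exp 1 / (n : ℝ)) ^ n := by positivity
  have key : Sm a₀ ν m n ≤ (m.choose n : ℝ) * (a₀ ^ (m - n) * Sm a₀ ν n n) := by
    have e2 : Sm a₀ ν m n
        = ∑ p ∈ A.image g, a₀ ^ (m - n) * ∏ j : Fin n, plw a₀ ν (p.2 j) := by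
      rw [Finset.sum_image hinj]
      exact Finset.sum_congr rfl fun k hk => hterm k hk
    rw [e2]
    have e3 : ∑ p ∈ A.image g, (a₀ ^ (m - n) * ∏ j : Fin n, plw a₀ ν (p.2 j))
        ≤ ∑ p ∈ ((Finset.univ : Finset (Fin m)).powersetCard n) ×ˢ Finset.Nat.antidiagonalTuple n n,
            a₀ ^ (m - n) * ∏ j : Fin n, plw a₀ ν (p.2 j) := by
      refine Finset.sum_le_sum_of_subset_of_nonneg ?_ ?_
      · intro p hp
        obtain ⟨k, hk, rfl⟩ := Finset.mem_image.mp hp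
        rw [Finset.mem_product]
        exact ⟨Finset.mem_powersetCard.mpr ⟨Finset.subset_univ _, hS3 k hk⟩, hg2 k hk⟩
      · intro p _ _
        exact le_of_lt (mul_pos (pow_pos ha _)
          (Finset.prod_pos fun j _ => plw_pos ha _))
    refine e3.trans (le_of_eq ?_)
    rw [Finset.sum_product]
    simp only [Prod.snd]
    rw [Finset.sum_const, Finset.card_powersetCard, hcardu, nsmul_eq_mul]
    rw [← Finset.mul_sum, Sm]
  have hchoose : (m.choose n : ℝ) ≤ ((m : ℝ) * Real.exp 1 / n) ^ n :=
    choose_le_bound m n hn0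
  calc Sm a₀ ν m n ≤ (m.choose n : ℝ) * (a₀ ^ (m - n) * Sm a₀ ν n n) := key
    _ ≤ (m.choose n : ℝ) * (a₀ ^ (m - n) * (B ^ (n - 1) * (n : ℝ) ^ (-ν))) := by
        refine mul_le_mul_of_nonneg_left ?_ (by positivity)
        exact mul_le_mul_of_nonneg_left hBn (by positivity)
    _ ≤ ((m : ℝ) * Real.exp 1 / n) ^ n * (a₀ ^ (m - n) * (B ^ (n - 1) * (n : ℝ) ^ (-ν))) := by
        refine mul_le_mul_of_nonneg_right hchoose ?_
        exact mul_nonneg (by positivity) (le_of_lt hBt)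
    _ = a₀ ^ (m - n) * ((m : ℝ) * Real.exp 1 / (n : ℝ)) ^ n * B ^ (n - 1) * (n : ℝ) ^ (-ν) := by
        ring
end
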